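/- Let ψ : ℝ → ℝ be differentiable with ψ'(z) = 1 − ψ(z)² for every z ∈ ℝ. Then either ψ is identically equal to 1, or ψ is identically equal to −1, or there exists c ∈ ℝ such that ψ(z) = tanh(z + c) for every z ∈ ℝ. -/

import Mathlib

open Set

/-- Derivative of `tanh`. -/
lemma aux_hasDerivAt_tanh (x : ℝ) :
    HasDerivAt Real.tanh (1 - Real.tanh x ^ 2) x := by
  have h := (Real.hasDerivAt_sinh x).div (Real.hasDerivAt_cosh x) (Real.cosh_pos x).ne'
  have heq : Real.tanh = fun y => Real.sinh y / Real.cosh y :=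
    funext fun y => Real.tanh_eq_sinh_div_cosh y
  rw [heq]
  refine h.congr_deriv ?_
  have hc := (Real.cosh_pos x).ne'
  have hid := Real.cosh_sq_sub_sinh_sq x
  beta_reduce
  field_simp

lemma aux_tanh_lt_one (x : ℝ) : Real.tanh x < 1 := by
  rw [Real.tanh_eq_sinh_div_cosh]
  exact (div_lt_one (Real.cosh_pos x)).mpr (Real.sinh_lt_cosh x)

lemma aux_neg_one_lt_tanh (x : ℝ) : -1 < Real.tanh x := by
  have := aux_tanh_lt_one (-x)
  rw [Real.tanh_neg] at this
  linarith

/-- Surjectivity of `tanh` onto `(-1, 1)`. -/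
lemma aux_exists_tanh_eq {y : ℝ} (h1 : -1 < y) (h2 : y < 1) : ∃ c : ℝ, Real.tanh c = y := by
  have hu : (0:ℝ) < (1 + y) / (1 - y) := div_pos (by linarith) (by linarith)
  refine ⟨Real.log ((1 + y) / (1 - y)) / 2, ?_⟩
  set c := Real.log ((1 + y) / (1 - y)) / 2 with hc
  have hE : (0:ℝ) < Real.exp c := Real.exp_pos c
  have h2c : Real.exp c * Real.exp c = (1 + y) / (1 - y) := by
    rw [← Real.exp_add, show c + c = Real.log ((1 + y) / (1 - y)) by rw [hc]; ring,
      Real.exp_log hu]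
  rw [Real.tanh_eq_sinh_div_cosh, Real.sinh_eq, Real.cosh_eq, Real.exp_neg]
  have hEne : Real.exp c ≠ 0 := hE.ne'
  have hne : Real.exp c + (Real.exp c)⁻¹ ≠ 0 := by positivity
  have h1y : (1:ℝ) - y ≠ 0 := by linarith
  field_simp at h2c ⊢
  nlinarith [h2c, hE]

/-- Blow-up: no global solution with value `> 1` somewhere. -/
lemma aux_blowup (ψ : ℝ → ℝ) (hdiff : Differentiable ℝ ψ)
    (hode : ∀ z : ℝ, deriv ψ z = 1 - (ψ z) ^ 2) (hgt : 1 < ψ 0) : False := by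
  -- key MVT estimate
  have key : ∀ a : ℝ, a ≤ 0 → (∀ z ∈ Icc a (0:ℝ), 1 < ψ z) →
      (ψ a - 1)⁻¹ ≤ (ψ 0 - 1)⁻¹ + a := by
    intro a ha hpos
    rcases eq_or_lt_of_le ha with rfl | ha'
    · simp
    set h : ℝ → ℝ := fun z => (ψ z - 1)⁻¹ with hh
    have hd : ∀ z ∈ Icc a (0:ℝ), HasDerivAt h (-(1 - (ψ z) ^ 2) / (ψ z - 1) ^ 2) z := by
      intro z hz
      have hz1 : ψ z - 1 ≠ 0 := by have := hpos z hz; intro hc; nlinarith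
      have hfd : HasDerivAt (fun w => ψ w - 1) (1 - (ψ z) ^ 2) z := by
        have := (hdiff z).hasDerivAt
        rw [hode z] at this
        exact this.sub_const 1
      exact hfd.inv hz1
    have hcont : ContinuousOn h (Icc a 0) := fun z hz => ((hd z hz).continuousAt).continuousWithinAt
    have hdiffOn : ∀ z ∈ Ioo a (0:ℝ), HasDerivAt h (-(1 - (ψ z) ^ 2) / (ψ z - 1) ^ 2) z :=
      fun z hz => hd z (Ioo_subset_Icc_self hz)
    obtain ⟨ξ, hξ, hslope⟩ :=
      exists_hasDerivAt_eq_slope h (fun z => -(1 - (ψ z) ^ 2) / (ψ z - 1) ^ 2) ha' hcont hdiffOn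
    have hξmem : ξ ∈ Icc a (0:ℝ) := Ioo_subset_Icc_self hξ
    have hp : 0 < ψ ξ - 1 := by have := hpos ξ hξmem; linarith
    have hge : (1:ℝ) ≤ -(1 - (ψ ξ) ^ 2) / (ψ ξ - 1) ^ 2 := by
      rw [le_div_iff₀ (by positivity)]
      nlinarith
    rw [hslope] at hge
    have hba : (0:ℝ) - a > 0 := by linarith
    rw [le_div_iff₀ hba] at hge
    have hha : 0 < h a := by
      have := hpos a ⟨le_refl a, ha⟩
      have : 0 < ψ a - 1 := by linarith
      positivity
    simp only [hh] at hge ⊢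
    linarith
  have hH : 0 < (ψ 0 - 1)⁻¹ := by
    have h0' : 0 < ψ 0 - 1 := by linarith
    positivity
  set H := (ψ 0 - 1)⁻¹ with hHdef
  by_cases hall : ∀ z ≤ (0:ℝ), 1 < ψ z
  · have hkey := key (-(H + 1)) (by linarith) (fun z hz => hall z hz.2)
    have h1 : 1 < ψ (-(H + 1)) := hall _ (by linarith)
    have : 0 < (ψ (-(H + 1)) - 1)⁻¹ := by
      have : 0 < ψ (-(H + 1)) - 1 := by linarith
      positivity
    linarith
  · push_neg at hall
    obtain ⟨z₀, hz₀, hz₀le⟩ := hall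
    set S : Set ℝ := {z | z ≤ 0 ∧ ψ z ≤ 1} with hS
    have hSne : S.Nonempty := ⟨z₀, hz₀, hz₀le⟩
    have hSbdd : BddAbove S := ⟨0, fun z hz => hz.1⟩
    have hSclosed : IsClosed S := by
      have : S = Iic 0 ∩ ψ ⁻¹' (Iic 1) := by ext z; simp [hS, Iic]
      rw [this]
      exact isClosed_Iic.inter (isClosed_Iic.preimage hdiff.continuous)
    set b := sSup S with hb
    have hbmem : b ∈ S := hSclosed.csSup_mem hSne hSbdd
    have hble : b ≤ 0 := hbmem.1
    have hψb : ψ b ≤ 1 := hbmem.2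
    have hbne : b < 0 := lt_of_le_of_ne hble (by intro hc; rw [hc] at hψb; linarith)
    have hgt' : ∀ z, b < z → z ≤ 0 → 1 < ψ z := by
      intro z h1z h2z
      by_contra hle
      push_neg at hle
      exact absurd (le_csSup hSbdd ⟨h2z, hle⟩) (not_le.2 h1z)
    -- pick z slightly to the right of b
    have hcontb : ContinuousAt ψ b := hdiff.continuous.continuousAt
    have hεpos : 0 < (H + 1)⁻¹ := by positivity
    obtain ⟨δ, hδpos, hδ⟩ := Metric.continuousAt_iff.mp hcontb _ hεpos
    set z := min (b + δ / 2) 0 with hzdef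
    have hbz : b < z := lt_min (by linarith) hbne
    have hz0 : z ≤ 0 := min_le_right _ _
    have hzb : |z - b| < δ := by
      rw [abs_of_pos (by linarith)]
      have : z ≤ b + δ / 2 := min_le_left _ _
      linarith
    have hclose : |ψ z - ψ b| < (H + 1)⁻¹ := by
      have := hδ (show dist z b < δ by rwa [Real.dist_eq])
      rwa [Real.dist_eq] at this
    have hψz : 1 < ψ z := hgt' z hbz hz0
    have hsmall : ψ z - 1 < (H + 1)⁻¹ := by
      have : ψ z - ψ b ≤ |ψ z - ψ b| := le_abs_self _
      linarith
    have hbig : H + 1 < (ψ z - 1)⁻¹ := by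
      have h1 : 0 < ψ z - 1 := by linarith
      calc H + 1 = ((H + 1)⁻¹)⁻¹ := by rw [inv_inv]
        _ < (ψ z - 1)⁻¹ := by
            apply inv_strictAnti₀ h1 hsmall
    have hkey := key z hz0 (fun w hw => hgt' w (lt_of_lt_of_le hbz hw.1) hw.2)
    linarith

/-- Solutions are bounded above by 1. -/
lemma aux_le_one (ψ : ℝ → ℝ) (hdiff : Differentiable ℝ ψ)
    (hode : ∀ z : ℝ, deriv ψ z = 1 - (ψ z) ^ 2) : ∀ z : ℝ, ψ z ≤ 1 := by
  intro z
  by_contra h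
  push_neg at h
  refine aux_blowup (fun w => ψ (w + z)) (hdiff.comp (differentiable_id.add_const z)) ?_
    (by simpa using h)
  intro w
  rw [deriv_comp_add_const]
  exact hode (w + z)

/-- Solutions are bounded below by -1. -/
lemma aux_neg_one_le (ψ : ℝ → ℝ) (hdiff : Differentiable ℝ ψ)
    (hode : ∀ z : ℝ, deriv ψ z = 1 - (ψ z) ^ 2) : ∀ z : ℝ, -1 ≤ ψ z := by
  intro z
  have hd : Differentiable ℝ (fun w => -ψ (-w)) := (hdiff.comp differentiable_neg).neg
  have hod : ∀ w : ℝ, deriv (fun w => -ψ (-w)) w = 1 - ((fun w => -ψ (-w)) w) ^ 2 := by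
    intro w
    have h1 : deriv (fun w => -ψ (-w)) w = deriv ψ (-w) := by
      rw [deriv.fun_neg, deriv_comp_neg, neg_neg]
    rw [h1, hode (-w)]
    ring
  have hle := aux_le_one _ hd hod (-z)
  simp only [neg_neg] at hle
  linarith

theorem ode_tanh_classification (ψ : ℝ → ℝ) (hdiff : Differentiable ℝ ψ)
    (hode : ∀ z : ℝ, deriv ψ z = 1 - (ψ z) ^ 2) :
    (∀ z : ℝ, ψ z = 1) ∨ (∀ z : ℝ, ψ z = -1) ∨
      ∃ c : ℝ, ∀ z : ℝ, ψ z = Real.tanh (z + c) := by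
  have hub := aux_le_one ψ hdiff hode
  have hlb := aux_neg_one_le ψ hdiff hode
  set v : ℝ → ℝ → ℝ := fun _ y => 1 - y ^ 2 with hv_def
  have hv : ∀ t : ℝ, LipschitzOnWith 2 (v t) (Icc (-1:ℝ) 1) := by
    intro t
    apply LipschitzOnWith.of_dist_le_mul
    intro x hx y hy
    simp only [Real.dist_eq, hv_def]
    obtain ⟨hx1, hx2⟩ := hx
    obtain ⟨hy1, hy2⟩ := hy
    have h2 : ((2:NNReal) : ℝ) = 2 := by norm_num
    rw [h2, abs_le]
    constructor
    · rcases le_or_gt x y with h | h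
      · have := abs_of_nonpos (show x - y ≤ 0 by linarith)
        nlinarith [abs_nonneg (x - y)]
      · have := abs_of_pos (show 0 < x - y by linarith)
        nlinarith
    · rcases le_or_gt x y with h | h
      · have := abs_of_nonpos (show x - y ≤ 0 by linarith)
        nlinarith
      · have := abs_of_pos (show 0 < x - y by linarith)
        nlinarith
  have hf' : ∀ t : ℝ, HasDerivAt ψ (v t (ψ t)) t := by
    intro t
    have := (hdiff t).hasDerivAt
    rwa [hode t] at this
  have huniq : ∀ g : ℝ → ℝ, (∀ t : ℝ, HasDerivAt g (1 - g t ^ 2) t) →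
      (∀ t : ℝ, g t ∈ Icc (-1:ℝ) 1) → ψ 0 = g 0 → ∀ z : ℝ, ψ z = g z := by
    intro g hg' hgs h0 z
    set T : ℝ := |z| + 1 with hT
    have hTpos : (0:ℝ) < T := by positivity
    have h0mem : (0:ℝ) ∈ Ioo (-T) T := ⟨by linarith, hTpos⟩
    have hgc : Continuous g := by
      have : Differentiable ℝ g := fun t => (hg' t).differentiableAt
      exact this.continuous
    have := ODE_solution_unique_of_mem_Icc (v := v) (s := fun _ => Icc (-1:ℝ) 1) (K := 2) (fun t _ => hv t)
      h0mem (hdiff.continuous.continuousOn) (fun t _ => hf' t) (fun t _ => ⟨hlb t, hub t⟩)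
      (hgc.continuousOn) (fun t _ => hg' t) (fun t _ => hgs t) h0
    exact this ⟨by have := neg_abs_le z; linarith, by have := le_abs_self z; linarith⟩
  rcases eq_or_lt_of_le (hub 0) with h1 | h1
  · left
    intro z
    refine huniq (fun _ => 1) ?_ (fun t => ⟨by norm_num, le_refl 1⟩) h1 z
    intro t
    simpa using hasDerivAt_const t (1:ℝ)
  · rcases eq_or_lt_of_le (hlb 0) with h2 | h2
    · right; left
      intro z
      refine huniq (fun _ => -1) ?_ (fun t => ⟨le_refl _, by norm_num⟩) h2.symm z
      intro t
      have : (1:ℝ) - (-1:ℝ) ^ 2 = 0 := by norm_num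
      rw [this]
      exact hasDerivAt_const t (-1:ℝ)
    · right; right
      obtain ⟨c, hc⟩ := aux_exists_tanh_eq h2 h1
      refine ⟨c, fun z => ?_⟩
      refine huniq (fun w => Real.tanh (w + c)) ?_
        (fun t => ⟨(aux_neg_one_lt_tanh _).le, (aux_tanh_lt_one _).le⟩)
        (by show ψ 0 = Real.tanh (0 + c); rw [zero_add, hc]) z
      intro t
      exact (aux_hasDerivAt_tanh (t + c)).comp_add_const t c
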